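/- For elements a ∈ A, b ∈ B of C*-algebras, the absolute value of an elementary tensor satisfies |a ⊗ b| = |a| ⊗ |b| in the (spatial) tensor product A ⊗ B, where |x| = (x*x)^{1/2}. -/

import Mathlib

/-- The spatial tensor product `A ⊗ B` is realized inside a C*-algebra `T` via a pair of
commuting injective star-algebra homomorphisms, an elementary tensor `a ⊗ b`
corresponding to `ιA a * ιB b`.  The statement: `|a ⊗ b| = |a| ⊗ |b|`, where
`|x| = (x*x)^(1/2)` is given by `CFC.sqrt (star x * x)`. -/
theorem stmt_13 (A B T : Type*)
    [CStarAlgebra A] [PartialOrder A] [StarOrderedRing A]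
    [CStarAlgebra B] [PartialOrder B] [StarOrderedRing B]
    [CStarAlgebra T] [PartialOrder T] [StarOrderedRing T]
    (ιA : A →⋆ₐ[ℂ] T) (ιB : B →⋆ₐ[ℂ] T)
    (hA : Function.Injective ιA) (hB : Function.Injective ιB)
    (hcomm : ∀ (a : A) (b : B), ιA a * ιB b = ιB b * ιA a)
    (a : A) (b : B) :
    CFC.sqrt (star (ιA a * ιB b) * (ιA a * ιB b)) =
      ιA (CFC.sqrt (star a * a)) * ιB (CFC.sqrt (star b * b)) := by
  set x : A := star a * a with hxdef
  set y : B := star b * b with hydef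
  have hx : (0 : A) ≤ x := star_mul_self_nonneg a
  have hy : (0 : B) ≤ y := star_mul_self_nonneg b
  -- Step 1: rewrite the argument of the square root as `ιA x * ιB y`.
  have key : star (ιA a * ιB b) * (ιA a * ιB b) = ιA x * ιB y := by
    calc star (ιA a * ιB b) * (ιA a * ιB b)
        = ιB (star b) * (ιA (star a) * ιA a) * ιB b := by
          rw [star_mul, map_star, map_star]; simp [mul_assoc]
      _ = ιB (star b) * ιA x * ιB b := by rw [← map_mul]
      _ = ιA x * ιB (star b) * ιB b := by rw [← hcomm]
      _ = ιA x * ιB y := by rw [mul_assoc, ← map_mul]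
  set p : A := CFC.sqrt x with hpdef
  set q : B := CFC.sqrt y with hqdef
  have hp : (0 : A) ≤ p := CFC.sqrt_nonneg x
  have hq : (0 : B) ≤ q := CFC.sqrt_nonneg y
  -- the candidate square root
  set s : T := ιA p * ιB q with hsdef
  -- Step 2: `s * s = ιA x * ιB y`.
  have hs2 : s * s = ιA x * ιB y := by
    calc ιA p * ιB q * (ιA p * ιB q)
        = ιA p * (ιB q * ιA p) * ιB q := by simp [mul_assoc]
      _ = ιA p * (ιA p * ιB q) * ιB q := by rw [← hcomm]
      _ = (ιA p * ιA p) * (ιB q * ιB q) := by simp [mul_assoc]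
      _ = ιA x * ιB y := by
          rw [← map_mul, ← map_mul, CFC.sqrt_mul_sqrt_self x hx,
            CFC.sqrt_mul_sqrt_self y hy]
  -- Step 3: `0 ≤ s`.
  have hs0 : (0 : T) ≤ s := by
    set r : A := CFC.sqrt p with hrdef
    have hr : (0 : A) ≤ r := CFC.sqrt_nonneg p
    have hrsa : star r = r := (IsSelfAdjoint.of_nonneg hr).star_eq
    have hrr : r * r = p := CFC.sqrt_mul_sqrt_self p hp
    -- `ιB q` is nonnegative
    have hq' : (0 : T) ≤ ιB q := by
      have hq2 : star (CFC.sqrt q) * CFC.sqrt q = q := by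
        rw [(IsSelfAdjoint.of_nonneg (CFC.sqrt_nonneg (a := q))).star_eq,
          CFC.sqrt_mul_sqrt_self q hq]
      calc (0 : T) ≤ star (ιB (CFC.sqrt q)) * ιB (CFC.sqrt q) :=
            star_mul_self_nonneg _
        _ = ιB q := by rw [← map_star, ← map_mul, hq2]
    have : s = star (ιA r) * ιB q * ιA r := by
      calc s = ιA (r * r) * ιB q := by rw [hrr]
        _ = ιA r * (ιA r * ιB q) := by rw [map_mul, mul_assoc]
        _ = ιA r * (ιB q * ιA r) := by rw [hcomm]
        _ = star (ιA r) * ιB q * ιA r := by rw [← map_star, hrsa, mul_assoc]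
    rw [this]
    exact star_left_conjugate_nonneg hq' _
  rw [key]
  exact CFC.sqrt_unique hs2 hs0
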